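/- Let g⁽¹⁾, g⁽²⁾ : (0,∞) → [0,∞) be measurable functions such that for j = 1, 2 and all x > 0, ∫₀^x (g⁽ʲ⁾(s))² ds = x^(2δ⁽ʲ⁾+1) · L⁽ʲ⁾(x), where δ⁽ʲ⁾ ∈ (−1/2, 1/2) and L⁽ʲ⁾ : (0,∞) → (0,∞) is continuous and slowly varying at zero. Let α ∈ (0,1] and let ρ : ℝ → ℝ be α-Hölder continuous with α + δ⁽¹⁾ + δ⁽²⁾ > 0. Then, writing Δ_n = 1/n, Σ_{i=1}^n ∫_{(i−1)Δ_n}^{iΔ_n} g⁽¹⁾(iΔ_n − s) · g⁽²⁾(iΔ_n − s) · (ρ(s) − ρ((i−1)Δ_n)) ds → 0 as n → ∞. -/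

import Mathlib

open MeasureTheory Filter Set



lemma slowly_varying_decay (L : ℝ → ℝ) (hLpos : ∀ x > 0, 0 < L x)
    (hLcont : ContinuousOn L (Set.Ioi 0))
    (hslow : Tendsto (fun t => L ((1/2) * t) / L t) (nhdsWithin 0 (Set.Ioi 0)) (nhds 1))
    {ε : ℝ} (hε : 0 < ε) :
    Tendsto (fun t => t ^ ε * L t) (nhdsWithin 0 (Set.Ioi 0)) (nhds 0) := by
  classical
  set C : ℝ := (2:ℝ) ^ (ε/2) with hCdef
  have hC1 : 1 < C := by
    rw [hCdef, Real.one_lt_rpow_iff_of_pos two_pos]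
    exact Or.inl ⟨one_lt_two, by positivity⟩
  have hC0 : 0 < C := lt_trans one_pos hC1
  have hev : ∀ᶠ t in nhdsWithin 0 (Set.Ioi 0), L ((1/2) * t) / L t < C :=
    hslow.eventually_lt_const hC1
  rw [eventually_nhdsWithin_iff, Metric.eventually_nhds_iff] at hev
  obtain ⟨t0, ht0, hball⟩ := hev
  have key : ∀ t ∈ Set.Ioo (0:ℝ) t0, L (t/2) ≤ C * L t := by
    intro t ht
    have h1 : L ((1/2) * t) / L t < C := by
      apply hball _ ht.1
      rw [Real.dist_eq, sub_zero, abs_of_pos ht.1]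
      exact ht.2
    have := (div_lt_iff₀ (hLpos t ht.1)).1 h1
    calc L (t/2) = L ((1/2) * t) := by ring_nf
    _ ≤ C * L t := this.le
  -- bound on compact
  have hsub : Set.Icc (t0/2) t0 ⊆ Set.Ioi (0:ℝ) := fun x hx => lt_of_lt_of_le (by positivity) hx.1
  obtain ⟨M, hM⟩ := isCompact_Icc.exists_bound_of_continuousOn (hLcont.mono hsub)
  have hM' : ∀ u ∈ Set.Icc (t0/2) t0, L u ≤ M := fun u hu =>
    (le_abs_self _).trans (by simpa [Real.norm_eq_abs] using hM u hu)
  have hM0 : 0 ≤ M := le_trans (hLpos t0 ht0).le (hM' t0 ⟨by linarith, le_rfl⟩)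
  -- iteration
  have iter : ∀ k : ℕ, ∀ u, u ∈ Set.Ioo (0:ℝ) t0 → L (u / 2^k) ≤ C^k * L u := by
    intro k
    induction k with
    | zero => intro u hu; simp
    | succ k ih =>
      intro u hu
      have h2 : u/2 ∈ Set.Ioo (0:ℝ) t0 := ⟨half_pos hu.1, by nlinarith [hu.1, hu.2]⟩
      calc L (u / 2^(k+1)) = L ((u/2) / 2^k) := by congr 1; ring
      _ ≤ C^k * L (u/2) := ih _ h2
      _ ≤ C^k * (C * L u) := by
          have := key u hu
          have hk : (0:ℝ) ≤ C^k := by positivity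
          nlinarith
      _ = C^(k+1) * L u := by ring
  -- ratio
  set r : ℝ := (2:ℝ) ^ (-(ε/2)) with hrdef
  have hr0 : 0 < r := Real.rpow_pos_of_pos two_pos _
  have hr1 : r < 1 := by
    rw [hrdef]
    apply Real.rpow_lt_one_of_one_lt_of_neg one_lt_two
    linarith
  rw [Metric.tendsto_nhdsWithin_nhds]
  intro δ' hδ'
  have htend : Tendsto (fun k : ℕ => t0 ^ ε * M * r ^ k) atTop (nhds 0) := by
    have := (tendsto_pow_atTop_nhds_zero_of_lt_one hr0.le hr1).const_mul (t0 ^ ε * M)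
    simpa using this
  obtain ⟨k0, hk0⟩ := (htend.eventually (gt_mem_nhds hδ')).exists
  refine ⟨t0 / 2^(k0+1), by positivity, ?_⟩
  intro s hs hds
  rw [Real.dist_eq, sub_zero, abs_of_pos hs] at hds
  rw [Real.dist_eq, sub_zero]
  have hs0 : (0:ℝ) < s := hs
  -- find k with 2^k s ∈ [t0/2, t0)
  have hex : ∃ k : ℕ, t0/2 ≤ 2^k * s := by
    obtain ⟨k, hk⟩ := pow_unbounded_of_one_lt (R := ℝ) ((t0/2)/s) one_lt_two
    refine ⟨k, ?_⟩
    rw [div_lt_iff₀ hs0] at hk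
    nlinarith [hk]
  set k := Nat.find hex with hkdef
  have hPk : t0/2 ≤ 2^k * s := Nat.find_spec hex
  have hsmall : s < t0 / 2^(k0+1) := hds
  have hk_ge : k0 < k := by
    by_contra h
    push_neg at h
    have h1 : (2:ℝ)^k * s ≤ 2^k0 * s := by
      have : (2:ℝ)^k ≤ 2^k0 := pow_le_pow_right₀ one_le_two h
      nlinarith
    have h2 : (2:ℝ)^k0 * s < t0/2 := by
      have := hsmall
      rw [lt_div_iff₀ (by positivity : (0:ℝ) < 2^(k0+1))] at this
      have h3 : (2:ℝ)^(k0+1) = 2 * 2^k0 := by ring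
      nlinarith [this]
    linarith
  have hk_ne : k ≠ 0 := by
    intro h
    rw [h] at hPk
    simp at hPk
    have : (0:ℝ) < 2^(k0+1) := by positivity
    have h4 : t0 / 2^(k0+1) ≤ t0 / 2 := by
      apply div_le_div_of_nonneg_left (by linarith) two_pos
      calc (2:ℝ) = 2^1 := by ring
      _ ≤ 2^(k0+1) := pow_le_pow_right₀ one_le_two (by omega)
    linarith
  have hnot : ¬ (t0/2 ≤ 2^(k-1) * s) := Nat.find_min hex (by omega)
  push_neg at hnot
  have hku : (2:ℝ)^k * s < t0 := by
    have h5 : (2:ℝ)^k = 2 * 2^(k-1) := by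
      rw [← pow_succ']
      congr 1
      omega
    nlinarith
  set u : ℝ := 2^k * s with hudef
  have hu0 : 0 < u := by positivity
  have huI : u ∈ Set.Ioo (0:ℝ) t0 := ⟨hu0, hku⟩
  have hsu : s = u / 2^k := by
    rw [hudef]; field_simp
  have hLs : L s ≤ C^k * M := by
    calc L s = L (u / 2^k) := by rw [← hsu]
    _ ≤ C^k * L u := iter k u huI
    _ ≤ C^k * M := by
        have := hM' u ⟨hPk, hku.le⟩
        have hk' : (0:ℝ) ≤ C^k := by positivity
        nlinarith
  have hsε : s ^ ε ≤ t0 ^ ε / ((2:ℝ)^k) ^ ε := by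
    rw [hsu, Real.div_rpow hu0.le (by positivity)]
    apply div_le_div_of_nonneg_right ?_ (by positivity)
    · exact Real.rpow_le_rpow hu0.le hku.le hε.le
  have hLs0 : 0 < L s := hLpos s hs0
  have habs : |s ^ ε * L s| = s ^ ε * L s := abs_of_pos (by positivity)
  rw [habs]
  have e1 : ((2:ℝ)^k)^ε = (2:ℝ)^((k:ℝ)*ε) := by
    rw [← Real.rpow_natCast 2 k, ← Real.rpow_mul (by norm_num)]
  have e2 : C^k = (2:ℝ)^((ε/2)*(k:ℝ)) := by
    rw [← Real.rpow_natCast C k, hCdef, ← Real.rpow_mul (by norm_num)]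
  have e3 : r^k = (2:ℝ)^(-(ε/2)*(k:ℝ)) := by
    rw [← Real.rpow_natCast r k, hrdef, ← Real.rpow_mul (by norm_num)]
  have e4 : (2:ℝ)^(-((k:ℝ)*ε)) * 2^((ε/2)*(k:ℝ)) = (2:ℝ)^(-(ε/2)*(k:ℝ)) := by
    rw [← Real.rpow_add two_pos]; congr 1; ring
  have eqn : (t0 ^ ε / ((2:ℝ)^k) ^ ε) * (C^k * M) = t0 ^ ε * M * r ^ k := by
    rw [e1, e2, e3, div_eq_mul_inv, ← Real.rpow_neg (by norm_num : (0:ℝ) ≤ 2)]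
    calc t0 ^ ε * 2 ^ (-((k:ℝ)*ε)) * (2 ^ ((ε/2)*(k:ℝ)) * M)
        = t0 ^ ε * M * ((2:ℝ)^(-((k:ℝ)*ε)) * 2^((ε/2)*(k:ℝ))) := by ring
      _ = t0 ^ ε * M * (2:ℝ)^(-(ε/2)*(k:ℝ)) := by rw [e4]
  have step1 : s ^ ε * L s ≤ (t0 ^ ε / ((2:ℝ)^k) ^ ε) * (C^k * M) :=
    mul_le_mul hsε hLs hLs0.le (by positivity)
  have step2 : t0 ^ ε * M * r ^ k ≤ t0 ^ ε * M * r ^ k0 := by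
    have : r ^ k ≤ r ^ k0 := pow_le_pow_of_le_one hr0.le hr1.le hk_ge.le
    have h0 : 0 ≤ t0 ^ ε * M := by positivity
    nlinarith
  rw [eqn] at step1
  linarith


private lemma aux_sum_bound
    (g1 g2 : ℝ → ℝ) (hmeas1 : Measurable g1) (hmeas2 : Measurable g2)
    (hpos1 : ∀ x > 0, 0 ≤ g1 x) (hpos2 : ∀ x > 0, 0 ≤ g2 x)
    (hmul : ∀ x > (0:ℝ), IntegrableOn (fun s => g1 s * g2 s) (Set.Ioc 0 x))
    (α K : ℝ) (hα : α ∈ Set.Ioc (0:ℝ) 1) (hK : 0 ≤ K)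
    (ρ : ℝ → ℝ) (hρ : ∀ u v : ℝ, |ρ u - ρ v| ≤ K * |u - v| ^ α)
    (n : ℕ) (hn : 1 ≤ n) :
    |∑ i ∈ Finset.range n,
        ∫ s in Set.Ioc ((i:ℝ) / n) (((i:ℝ) + 1) / n),
          g1 (((i:ℝ) + 1) / n - s) * g2 (((i:ℝ) + 1) / n - s) * (ρ s - ρ ((i:ℝ) / n))|
      ≤ (n:ℝ) * (K * ((1:ℝ)/n) ^ α * ∫ u in Set.Ioc (0:ℝ) ((1:ℝ)/n), g1 u * g2 u) := by
  have hn0 : (0:ℝ) < n := by exact_mod_cast hn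
  have hΔ : (0:ℝ) < 1/n := by positivity
  set Δ : ℝ := 1 / n with hΔdef
  set I : ℝ := ∫ u in Set.Ioc (0:ℝ) Δ, g1 u * g2 u with hIdef
  -- per-term facts
  have hterm : ∀ i : ℕ,
      |∫ s in Set.Ioc ((i:ℝ) / n) (((i:ℝ) + 1) / n),
          g1 (((i:ℝ) + 1) / n - s) * g2 (((i:ℝ) + 1) / n - s) * (ρ s - ρ ((i:ℝ) / n))|
        ≤ K * Δ ^ α * I := by
    intro i
    set a : ℝ := (i:ℝ) / n with hadef
    set b : ℝ := ((i:ℝ) + 1) / n with hbdef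
    have hba : b - a = Δ := by rw [hadef, hbdef, hΔdef]; field_simp; ring
    have hab : a < b := by
      have : 0 < b - a := hba ▸ hΔ
      linarith
    -- substitution identity
    have hsub : (∫ s in Set.Ioc a b, g1 (b - s) * g2 (b - s)) = I := by
      rw [hIdef, ← intervalIntegral.integral_of_le hab.le,
        ← intervalIntegral.integral_of_le hΔ.le]
      have h := intervalIntegral.integral_comp_sub_left
        (f := fun u => g1 u * g2 u) (a := a) (b := b) b
      rw [h, sub_self, hba]
    -- integrability of the transported product
    have hI0 : IntervalIntegrable (fun u => g1 u * g2 u) volume 0 Δ :=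
      (intervalIntegrable_iff_integrableOn_Ioc_of_le hΔ.le).2 (hmul Δ hΔ)
    have hI1 : IntegrableOn (fun s => g1 (b - s) * g2 (b - s)) (Set.Ioc a b) := by
      have h1 := (hI0.comp_sub_left b).symm
      rw [sub_zero] at h1
      have hba' : b - Δ = a := by linarith
      rw [hba'] at h1
      exact (intervalIntegrable_iff_integrableOn_Ioc_of_le hab.le).1 h1
    -- move to Ioo
    rw [integral_Ioc_eq_integral_Ioo]
    have hb1 : ‖∫ s in Set.Ioo a b, g1 (b - s) * g2 (b - s) * (ρ s - ρ a)‖ ≤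
        ∫ s in Set.Ioo a b, K * Δ ^ α * (g1 (b - s) * g2 (b - s)) := by
      apply norm_integral_le_of_norm_le
      · exact ((hI1.mono_set Set.Ioo_subset_Ioc_self).const_mul (K * Δ ^ α))
      · rw [ae_restrict_iff' measurableSet_Ioo]
        apply ae_of_all
        intro s hs
        have hbs : 0 < b - s := by linarith [hs.2]
        have hg : 0 ≤ g1 (b - s) * g2 (b - s) :=
          mul_nonneg (hpos1 _ hbs) (hpos2 _ hbs)
        have hw : |ρ s - ρ a| ≤ K * Δ ^ α := by
          calc |ρ s - ρ a| ≤ K * |s - a| ^ α := hρ s a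
          _ ≤ K * Δ ^ α := by
              apply mul_le_mul_of_nonneg_left ?_ hK
              apply Real.rpow_le_rpow (abs_nonneg _) ?_ hα.1.le
              rw [abs_of_pos (by linarith [hs.1] : (0:ℝ) < s - a)]
              linarith [hs.2, hba]
        rw [Real.norm_eq_abs, abs_mul, abs_of_nonneg hg]
        calc g1 (b - s) * g2 (b - s) * |ρ s - ρ a|
            ≤ g1 (b - s) * g2 (b - s) * (K * Δ ^ α) :=
              mul_le_mul_of_nonneg_left hw hg
        _ = K * Δ ^ α * (g1 (b - s) * g2 (b - s)) := by ring
    rw [Real.norm_eq_abs] at hb1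
    calc |∫ s in Set.Ioo a b, g1 (b - s) * g2 (b - s) * (ρ s - ρ a)|
        ≤ ∫ s in Set.Ioo a b, K * Δ ^ α * (g1 (b - s) * g2 (b - s)) := hb1
    _ = K * Δ ^ α * ∫ s in Set.Ioo a b, g1 (b - s) * g2 (b - s) := by
        rw [integral_const_mul]
    _ = K * Δ ^ α * ∫ s in Set.Ioc a b, g1 (b - s) * g2 (b - s) := by
        rw [integral_Ioc_eq_integral_Ioo]
    _ = K * Δ ^ α * I := by rw [hsub]
  -- sum up
  calc |∑ i ∈ Finset.range n,
        ∫ s in Set.Ioc ((i:ℝ) / n) (((i:ℝ) + 1) / n),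
          g1 (((i:ℝ) + 1) / n - s) * g2 (((i:ℝ) + 1) / n - s) * (ρ s - ρ ((i:ℝ) / n))|
      ≤ ∑ i ∈ Finset.range n, |∫ s in Set.Ioc ((i:ℝ) / n) (((i:ℝ) + 1) / n),
          g1 (((i:ℝ) + 1) / n - s) * g2 (((i:ℝ) + 1) / n - s) * (ρ s - ρ ((i:ℝ) / n))| :=
        Finset.abs_sum_le_sum_abs _ _
    _ ≤ ∑ _i ∈ Finset.range n, K * Δ ^ α * I :=
        Finset.sum_le_sum fun i _ => hterm i
    _ = (n:ℝ) * (K * Δ ^ α * I) := by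
        rw [Finset.sum_const, Finset.card_range, nsmul_eq_mul]


private lemma aux_b_tendsto (L1 L2 : ℝ → ℝ)
    (hL1pos : ∀ x > 0, 0 < L1 x) (hL2pos : ∀ x > 0, 0 < L2 x)
    (δ1 δ2 α K : ℝ) (hα : 0 < α)
    (e : ℝ) (he : e = α + δ1 + δ2) (hexp : 0 < e)
    (hd1 : Tendsto (fun t => t ^ e * L1 t) (nhdsWithin 0 (Set.Ioi 0)) (nhds 0))
    (hd2 : Tendsto (fun t => t ^ e * L2 t) (nhdsWithin 0 (Set.Ioi 0)) (nhds 0)) :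
    Tendsto (fun t : ℝ => K * t ^ (α-1) *
      ((t ^ (2*δ1+1) * L1 t) ^ ((1:ℝ)/2) * (t ^ (2*δ2+1) * L2 t) ^ ((1:ℝ)/2)))
      (nhdsWithin 0 (Set.Ioi 0)) (nhds 0) := by
  have hroot : ContinuousAt (fun x : ℝ => x ^ ((1:ℝ)/2)) 0 :=
    Real.continuousAt_rpow_const 0 _ (Or.inr (by norm_num))
  have hz : (0:ℝ) ^ ((1:ℝ)/2) = 0 := Real.zero_rpow (by norm_num)
  have hA : Tendsto (fun t : ℝ => (t ^ e * L1 t) ^ ((1:ℝ)/2))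
      (nhdsWithin 0 (Set.Ioi 0)) (nhds 0) := by
    have := hroot.tendsto.comp hd1
    rwa [hz] at this
  have hB : Tendsto (fun t : ℝ => (t ^ e * L2 t) ^ ((1:ℝ)/2))
      (nhdsWithin 0 (Set.Ioi 0)) (nhds 0) := by
    have := hroot.tendsto.comp hd2
    rwa [hz] at this
  have hmain : Tendsto (fun t : ℝ => K *
      ((t ^ e * L1 t) ^ ((1:ℝ)/2) * (t ^ e * L2 t) ^ ((1:ℝ)/2)))
      (nhdsWithin 0 (Set.Ioi 0)) (nhds 0) := by
    have := (hA.mul hB).const_mul K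
    simpa using this
  apply hmain.congr'
  filter_upwards [self_mem_nhdsWithin] with t ht
  have ht0 : (0:ℝ) < t := ht
  have hL1t := (hL1pos t ht0).le
  have hL2t := (hL2pos t ht0).le
  rw [Real.mul_rpow (Real.rpow_nonneg ht0.le _) hL1t,
      Real.mul_rpow (Real.rpow_nonneg ht0.le _) hL2t,
      Real.mul_rpow (Real.rpow_nonneg ht0.le _) hL1t,
      Real.mul_rpow (Real.rpow_nonneg ht0.le _) hL2t,
      ← Real.rpow_mul ht0.le, ← Real.rpow_mul ht0.le,
      ← Real.rpow_mul ht0.le]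
  have hcomb : t ^ (e * ((1:ℝ)/2)) * t ^ (e * ((1:ℝ)/2)) =
      t ^ (α-1) * (t ^ ((2*δ1+1) * ((1:ℝ)/2)) * t ^ ((2*δ2+1) * ((1:ℝ)/2))) := by
    rw [← Real.rpow_add ht0, ← Real.rpow_add ht0, ← Real.rpow_add ht0]
    congr 1
    rw [he]; ring
  calc K * (t ^ (e * ((1:ℝ)/2)) * L1 t ^ ((1:ℝ)/2) *
        (t ^ (e * ((1:ℝ)/2)) * L2 t ^ ((1:ℝ)/2)))
      = K * (t ^ (e * ((1:ℝ)/2)) * t ^ (e * ((1:ℝ)/2))) *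
        (L1 t ^ ((1:ℝ)/2) * L2 t ^ ((1:ℝ)/2)) := by ring
    _ = K * (t ^ (α-1) * (t ^ ((2*δ1+1) * ((1:ℝ)/2)) * t ^ ((2*δ2+1) * ((1:ℝ)/2)))) *
        (L1 t ^ ((1:ℝ)/2) * L2 t ^ ((1:ℝ)/2)) := by rw [hcomb]
    _ = K * t ^ (α-1) *
        (t ^ ((2*δ1+1) * ((1:ℝ)/2)) * L1 t ^ ((1:ℝ)/2) *
          (t ^ ((2*δ2+1) * ((1:ℝ)/2)) * L2 t ^ ((1:ℝ)/2))) := by ring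


/-- **Blocking error vanishes (deterministic content of Lemma 5.4).** Let
`g⁽ʲ⁾ : (0,∞) → [0,∞)` be measurable with `∫₀^x (g⁽ʲ⁾)² = x^(2δ⁽ʲ⁾+1) L⁽ʲ⁾(x)` for
continuous, positive functions `L⁽ʲ⁾` slowly varying at zero, `δ⁽ʲ⁾ ∈ (-1/2,1/2)`,
and let `ρ` be `α`-Hölder continuous with `α + δ⁽¹⁾ + δ⁽²⁾ > 0`. Then with
`Δ_n = 1/n`,
`∑_{i=1}^n ∫_{(i-1)Δ_n}^{iΔ_n} g⁽¹⁾(iΔ_n - s) g⁽²⁾(iΔ_n - s) (ρ s - ρ((i-1)Δ_n)) ds → 0`. -/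
theorem blocking_error_vanishes
    (g1 g2 : ℝ → ℝ) (hmeas1 : Measurable g1) (hmeas2 : Measurable g2)
    (hpos1 : ∀ x > 0, 0 ≤ g1 x) (hpos2 : ∀ x > 0, 0 ≤ g2 x)
    (δ1 δ2 : ℝ) (hδ1 : δ1 ∈ Set.Ioo (-(1/2) : ℝ) (1/2))
    (hδ2 : δ2 ∈ Set.Ioo (-(1/2) : ℝ) (1/2))
    (L1 L2 : ℝ → ℝ)
    (hL1pos : ∀ x > 0, 0 < L1 x) (hL2pos : ∀ x > 0, 0 < L2 x)
    (hL1cont : ContinuousOn L1 (Set.Ioi 0)) (hL2cont : ContinuousOn L2 (Set.Ioi 0))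
    (hL1slow : ∀ c > 0, Tendsto (fun t => L1 (c * t) / L1 t)
      (nhdsWithin 0 (Set.Ioi 0)) (nhds 1))
    (hL2slow : ∀ c > 0, Tendsto (fun t => L2 (c * t) / L2 t)
      (nhdsWithin 0 (Set.Ioi 0)) (nhds 1))
    (hint1 : ∀ x > 0, (∫ s in Set.Ioc (0:ℝ) x, (g1 s) ^ 2) = x ^ (2 * δ1 + 1) * L1 x)
    (hint2 : ∀ x > 0, (∫ s in Set.Ioc (0:ℝ) x, (g2 s) ^ 2) = x ^ (2 * δ2 + 1) * L2 x)
    (α K : ℝ) (hα : α ∈ Set.Ioc (0:ℝ) 1) (hK : 0 ≤ K)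
    (ρ : ℝ → ℝ) (hρ : ∀ u v : ℝ, |ρ u - ρ v| ≤ K * |u - v| ^ α)
    (hexp : 0 < α + δ1 + δ2) :
    Tendsto (fun n : ℕ => ∑ i ∈ Finset.range n,
        ∫ s in Set.Ioc ((i:ℝ) / n) (((i:ℝ) + 1) / n),
          g1 (((i:ℝ) + 1) / n - s) * g2 (((i:ℝ) + 1) / n - s) * (ρ s - ρ ((i:ℝ) / n)))
      atTop (nhds 0) := by
  -- integrability of squares
  have hsq1 : ∀ x > (0:ℝ), IntegrableOn (fun s => (g1 s)^2) (Set.Ioc 0 x) := by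
    intro x hx
    by_contra h
    have h0 := integral_undef (μ := volume.restrict (Set.Ioc 0 x)) h
    rw [hint1 x hx] at h0
    have : 0 < x ^ (2*δ1+1) * L1 x :=
      mul_pos (Real.rpow_pos_of_pos hx _) (hL1pos x hx)
    linarith
  have hsq2 : ∀ x > (0:ℝ), IntegrableOn (fun s => (g2 s)^2) (Set.Ioc 0 x) := by
    intro x hx
    by_contra h
    have h0 := integral_undef (μ := volume.restrict (Set.Ioc 0 x)) h
    rw [hint2 x hx] at h0
    have : 0 < x ^ (2*δ2+1) * L2 x :=
      mul_pos (Real.rpow_pos_of_pos hx _) (hL2pos x hx)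
    linarith
  -- integrability of the product
  have hmul : ∀ x > (0:ℝ), IntegrableOn (fun s => g1 s * g2 s) (Set.Ioc 0 x) := by
    intro x hx
    apply Integrable.mono' (((hsq1 x hx).add (hsq2 x hx)).const_mul (1/2))
    · exact (hmeas1.mul hmeas2).aestronglyMeasurable
    · apply ae_of_all
      intro s
      rw [Real.norm_eq_abs, abs_mul]
      simp only [Pi.add_apply]
      nlinarith [sq_nonneg (|g1 s| - |g2 s|), sq_abs (g1 s), sq_abs (g2 s),
        abs_nonneg (g1 s), abs_nonneg (g2 s)]
  -- Cauchy–Schwarz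
  have hCS : ∀ x > (0:ℝ), (∫ s in Set.Ioc (0:ℝ) x, g1 s * g2 s) ≤
      (x ^ (2*δ1+1) * L1 x) ^ ((1:ℝ)/2) * (x ^ (2*δ2+1) * L2 x) ^ ((1:ℝ)/2) := by
    intro x hx
    have hpq : Real.HolderConjugate 2 2 := Real.HolderConjugate.two_two
    have hae1 : 0 ≤ᵐ[volume.restrict (Set.Ioc (0:ℝ) x)] g1 :=
      (ae_restrict_iff' measurableSet_Ioc).2 (ae_of_all _ fun s hs => hpos1 s hs.1)
    have hae2 : 0 ≤ᵐ[volume.restrict (Set.Ioc (0:ℝ) x)] g2 :=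
      (ae_restrict_iff' measurableSet_Ioc).2 (ae_of_all _ fun s hs => hpos2 s hs.1)
    have hm1 : MemLp g1 (ENNReal.ofReal 2) (volume.restrict (Set.Ioc (0:ℝ) x)) := by
      rw [show ENNReal.ofReal 2 = 2 by norm_num]
      exact (memLp_two_iff_integrable_sq hmeas1.aestronglyMeasurable).2 (hsq1 x hx)
    have hm2 : MemLp g2 (ENNReal.ofReal 2) (volume.restrict (Set.Ioc (0:ℝ) x)) := by
      rw [show ENNReal.ofReal 2 = 2 by norm_num]
      exact (memLp_two_iff_integrable_sq hmeas2.aestronglyMeasurable).2 (hsq2 x hx)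
    have hH := integral_mul_le_Lp_mul_Lq_of_nonneg hpq hae1 hae2 hm1 hm2
    have hconv : ∀ h : ℝ → ℝ, (∫ s in Set.Ioc (0:ℝ) x, (h s) ^ (2:ℝ)) =
        ∫ s in Set.Ioc (0:ℝ) x, (h s) ^ 2 := by
      intro h
      apply integral_congr_ae
      apply ae_of_all
      intro s
      exact Real.rpow_two (h s)
    rw [hconv g1, hconv g2, hint1 x hx, hint2 x hx] at hH
    convert hH using 3 <;> norm_num
  -- per-n bound
  set b : ℝ → ℝ := fun t => K * t ^ (α-1) *
      ((t ^ (2*δ1+1) * L1 t) ^ ((1:ℝ)/2) * (t ^ (2*δ2+1) * L2 t) ^ ((1:ℝ)/2)) with hbdef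
  have hbound : ∀ n : ℕ, 1 ≤ n →
      |∑ i ∈ Finset.range n,
        ∫ s in Set.Ioc ((i:ℝ) / n) (((i:ℝ) + 1) / n),
          g1 (((i:ℝ) + 1) / n - s) * g2 (((i:ℝ) + 1) / n - s) * (ρ s - ρ ((i:ℝ) / n))|
        ≤ b ((1:ℝ)/n) := by
    intro n hn
    have hn0 : (0:ℝ) < n := by exact_mod_cast hn
    have hΔ : (0:ℝ) < 1/n := by positivity
    have h2 := aux_sum_bound g1 g2 hmeas1 hmeas2 hpos1 hpos2 hmul α K hα hK ρ hρ n hn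
    have h3 : (n:ℝ) * (K * ((1:ℝ)/n) ^ α * ∫ u in Set.Ioc (0:ℝ) ((1:ℝ)/n), g1 u * g2 u)
        = K * ((1:ℝ)/n) ^ (α-1) * ∫ u in Set.Ioc (0:ℝ) ((1:ℝ)/n), g1 u * g2 u := by
      have h1 : ((1:ℝ)/n) ^ (α-1) = ((1:ℝ)/n) ^ α * (n:ℝ) := by
        rw [Real.rpow_sub hΔ, Real.rpow_one, div_eq_mul_inv]
        congr 1
        rw [one_div, inv_inv]
      rw [h1]; ring
    have h4 : K * ((1:ℝ)/n) ^ (α-1) * (∫ u in Set.Ioc (0:ℝ) ((1:ℝ)/n), g1 u * g2 u)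
        ≤ b ((1:ℝ)/n) := by
      rw [hbdef]
      exact mul_le_mul_of_nonneg_left (hCS _ hΔ) (by positivity)
    calc |∑ i ∈ Finset.range n,
        ∫ s in Set.Ioc ((i:ℝ) / n) (((i:ℝ) + 1) / n),
          g1 (((i:ℝ) + 1) / n - s) * g2 (((i:ℝ) + 1) / n - s) * (ρ s - ρ ((i:ℝ) / n))|
        ≤ (n:ℝ) * (K * ((1:ℝ)/n) ^ α * ∫ u in Set.Ioc (0:ℝ) ((1:ℝ)/n), g1 u * g2 u) := h2
      _ = K * ((1:ℝ)/n) ^ (α-1) * ∫ u in Set.Ioc (0:ℝ) ((1:ℝ)/n), g1 u * g2 u := h3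
      _ ≤ b ((1:ℝ)/n) := h4
  -- the bound tends to zero
  have hd1 : Tendsto (fun t : ℝ => t ^ (α+δ1+δ2) * L1 t)
      (nhdsWithin 0 (Set.Ioi 0)) (nhds 0) :=
    slowly_varying_decay L1 hL1pos hL1cont (hL1slow (1/2) (by norm_num)) hexp
  have hd2 : Tendsto (fun t : ℝ => t ^ (α+δ1+δ2) * L2 t)
      (nhdsWithin 0 (Set.Ioi 0)) (nhds 0) :=
    slowly_varying_decay L2 hL2pos hL2cont (hL2slow (1/2) (by norm_num)) hexp
  have hb0 : Tendsto b (nhdsWithin 0 (Set.Ioi 0)) (nhds 0) :=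
    aux_b_tendsto L1 L2 hL1pos hL2pos δ1 δ2 α K hα.1 (α+δ1+δ2) rfl hexp hd1 hd2
  have h1n : Tendsto (fun n : ℕ => (1:ℝ)/n) atTop (nhdsWithin 0 (Set.Ioi 0)) := by
    rw [tendsto_nhdsWithin_iff]
    refine ⟨tendsto_one_div_atTop_nhds_zero_nat, ?_⟩
    filter_upwards [eventually_ge_atTop 1] with n hn
    have : (0:ℝ) < n := by exact_mod_cast hn
    exact mem_Ioi.2 (by positivity)
  have hcomp : Tendsto (fun n : ℕ => b ((1:ℝ)/n)) atTop (nhds 0) := hb0.comp h1n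
  apply squeeze_zero_norm' ?_ hcomp
  filter_upwards [eventually_ge_atTop 1] with n hn
  rw [Real.norm_eq_abs]
  exact hbound n hn
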